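/- Let h > 0, α > 1, β ≥ 0, c_v > 0, and suppose functions v_k : ℝ → ℂ satisfy sup_t |v_k(t)| ≤ c_v e^{-β|k|}/⟨k⟩^α and sup_t |v̇_k(t)| ≤ c_v e^{-β|k|}/⟨k⟩^α. Fix k₀ ∈ ℤ and define A₂(t) = -∫₀ᵗ ∑_{j≠±k₀} v_{k₀-j}(τ) v_{j-k₀}(0) e^{τ(j²-k₀²)/(ih)} / (k₀²-j²) dτ. Then |A₂(t)| ≤ (2+|t|) h c_v² c₁ / ⟨k₀⟩² for an absolute constant c₁ (depending only on α). -/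

import Mathlib

open MeasureTheory intervalIntegral Complex

/-- ⟨k⟩ = |k| + 1 -/
noncomputable def br (k : ℤ) : ℝ := |(k : ℝ)| + 1

lemma br_ge_one (k : ℤ) : 1 ≤ br k := by
  unfold br
  have := abs_nonneg ((k:ℤ):ℝ)
  linarith

lemma br_pos (k : ℤ) : 0 < br k := lt_of_lt_of_le one_pos (br_ge_one k)

lemma br_rpow_ge (α : ℝ) (hα : 1 ≤ α) (k : ℤ) : br k ≤ br k ^ α := by
  nth_rewrite 1 [← Real.rpow_one (br k)]
  exact Real.rpow_le_rpow_of_exponent_le (br_ge_one k) hα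

lemma br_rpow_pos (α : ℝ) (k : ℤ) : 0 < br k ^ α := Real.rpow_pos_of_pos (br_pos k) α

lemma br_neg (k : ℤ) : br (-k) = br k := by unfold br; push_cast; rw [abs_neg]

lemma norm_exp_unit (r h : ℝ) (hh : h ≠ 0) (τ : ℝ) :
    ‖Complex.exp ((τ:ℂ) * (r:ℂ) / (Complex.I * (h:ℂ)))‖ = 1 := by
  have hh' : (h:ℂ) ≠ 0 := by exact_mod_cast hh
  have key : (τ:ℂ) * (r:ℂ) / (Complex.I * (h:ℂ)) = -((τ * r / h : ℝ) : ℂ) * Complex.I := by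
    push_cast
    rw [div_eq_iff (mul_ne_zero Complex.I_ne_zero hh')]
    have e : (h:ℂ) / (h:ℂ) = 1 := div_self hh'
    linear_combination (-((r:ℂ) * (τ:ℂ))) * e + ((r:ℂ) * (τ:ℂ) * (h:ℂ) / (h:ℂ)) * Complex.I_mul_I
  rw [key, Complex.norm_exp]
  have : (-((τ * r / h : ℝ) : ℂ) * Complex.I).re = 0 := by simp
  rw [this, Real.exp_zero]

lemma key_arith2 (α : ℝ) (hα : 1 ≤ α) (k₀ j : ℤ) (h1 : j ≠ k₀) (h2 : j ≠ -k₀) :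
    ((k₀ - j : ℤ) : ℝ) ^ 2 ≤ (br (k₀ - j) ^ α) ^ 2 * |(((j ^ 2 - k₀ ^ 2 : ℤ)) : ℝ)| := by
  have hr0 : (j ^ 2 - k₀ ^ 2 : ℤ) ≠ 0 := by
    intro hc
    have : (j - k₀) * (j + k₀) = 0 := by linarith [hc]
    rcases mul_eq_zero.mp this with h | h
    · exact h1 (by omega)
    · exact h2 (by omega)
  have hr1 : (1:ℝ) ≤ |(((j ^ 2 - k₀ ^ 2 : ℤ)) : ℝ)| := by
    rw [← Int.cast_abs]
    exact_mod_cast Int.one_le_abs hr0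
  have hbr : br (k₀ - j) = |((k₀ - j : ℤ) : ℝ)| + 1 := rfl
  have hm : |((k₀ - j : ℤ) : ℝ)| + 1 ≤ br (k₀ - j) ^ α := by
    have := br_rpow_ge α hα (k₀ - j)
    linarith [hbr ▸ this]
  have hmsq : ((k₀ - j : ℤ) : ℝ) ^ 2 ≤ (br (k₀ - j) ^ α) ^ 2 := by
    rw [← _root_.sq_abs]
    have h0 : (0:ℝ) ≤ |((k₀ - j : ℤ) : ℝ)| := abs_nonneg _
    nlinarith
  calc ((k₀ - j : ℤ) : ℝ) ^ 2 ≤ (br (k₀ - j) ^ α) ^ 2 := hmsq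
    _ ≤ (br (k₀ - j) ^ α) ^ 2 * |(((j ^ 2 - k₀ ^ 2 : ℤ)) : ℝ)| :=
        le_mul_of_one_le_right (by positivity) hr1

lemma key_arith (α : ℝ) (hα : 1 ≤ α) (k₀ j : ℤ) (h1 : j ≠ k₀) (h2 : j ≠ -k₀) :
    br k₀ ^ 2 * ((k₀ - j : ℤ) : ℝ) ^ 2
      ≤ (br (k₀ - j) ^ α) ^ 2 * (((j ^ 2 - k₀ ^ 2 : ℤ)) : ℝ) ^ 2 := by
  have hm0 : (k₀ - j : ℤ) ≠ 0 := sub_ne_zero.2 (Ne.symm h1)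
  have hs0 : (j + k₀ : ℤ) ≠ 0 := fun hc => h2 (by omega)
  have hcast1 : ((k₀ - j : ℤ) : ℝ) = (k₀ : ℝ) - (j : ℝ) := by push_cast; ring
  have hcast2 : (((j ^ 2 - k₀ ^ 2 : ℤ)) : ℝ) = (j : ℝ) ^ 2 - (k₀ : ℝ) ^ 2 := by push_cast; ring
  set x : ℝ := (j : ℝ) with hx
  set y : ℝ := (k₀ : ℝ) with hy
  have hbrm : br (k₀ - j) = |y - x| + 1 := by unfold br; rw [hcast1]
  have hbrk : br k₀ = |y| + 1 := rfl
  have ha1 : 1 ≤ |y - x| := by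
    rw [← hcast1, ← Int.cast_abs]
    exact_mod_cast Int.one_le_abs hm0
  have hd1 : 1 ≤ |x + y| := by
    have : ((j + k₀ : ℤ) : ℝ) = x + y := by push_cast; ring
    rw [← this, ← Int.cast_abs]
    exact_mod_cast Int.one_le_abs hs0
  have hbig1 : 1 ≤ br (k₀ - j) ^ α := le_trans (br_ge_one _) (br_rpow_ge α hα _)
  have hbig2 : |y - x| + 1 ≤ br (k₀ - j) ^ α := by
    rw [← hbrm]; exact br_rpow_ge α hα _
  have hfact : (x ^ 2 - y ^ 2) ^ 2 = (y - x) ^ 2 * (x + y) ^ 2 := by ring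
  have hsq1 : (y - x) ^ 2 = |y - x| ^ 2 := (_root_.sq_abs _).symm
  have hsq2 : (x + y) ^ 2 = |x + y| ^ 2 := (_root_.sq_abs _).symm
  rw [hcast1, hcast2, hbrk, hfact]
  rcases le_or_gt (|k₀| : ℤ) (|k₀ - j|) with hcase | hcase
  · have hKa : |y| ≤ |y - x| := by
      rw [← hcast1, hy]
      exact_mod_cast hcase
    have hA : |y| + 1 ≤ br (k₀ - j) ^ α := by linarith
    have e1 : (|y| + 1) ^ 2 ≤ (br (k₀ - j) ^ α) ^ 2 := pow_le_pow_left₀ (by positivity) hA 2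
    have e2 : (1:ℝ) ≤ (x + y) ^ 2 := by rw [hsq2]; nlinarith
    calc (|y| + 1) ^ 2 * (y - x) ^ 2
        ≤ (br (k₀ - j) ^ α) ^ 2 * (y - x) ^ 2 := mul_le_mul_of_nonneg_right e1 (sq_nonneg _)
      _ ≤ (br (k₀ - j) ^ α) ^ 2 * ((y - x) ^ 2 * (x + y) ^ 2) :=
          mul_le_mul_of_nonneg_left (le_mul_of_one_le_right (sq_nonneg _) e2) (by positivity)
  · have hKa : |y - x| + 1 ≤ |y| := by
      rw [← hcast1, hy]
      exact_mod_cast Int.lt_iff_add_one_le.mp hcase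
    have h2y : |2 * y| ≤ |x + y| + |y - x| := by
      calc |2 * y| = |(x + y) + (y - x)| := by ring_nf
        _ ≤ |x + y| + |y - x| := abs_add_le _ _
    have h2y' : |2 * y| = 2 * |y| := by rw [abs_mul]; norm_num
    have hD : |y| + 1 ≤ |x + y| := by linarith
    have e3 : (|y| + 1) ^ 2 ≤ (x + y) ^ 2 := by
      rw [hsq2]; exact pow_le_pow_left₀ (by positivity) hD 2
    have e4 : (1:ℝ) ≤ (br (k₀ - j) ^ α) ^ 2 := by nlinarith
    calc (|y| + 1) ^ 2 * (y - x) ^ 2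
        ≤ (x + y) ^ 2 * (y - x) ^ 2 := mul_le_mul_of_nonneg_right e3 (sq_nonneg _)
      _ = (y - x) ^ 2 * (x + y) ^ 2 := by ring
      _ ≤ (br (k₀ - j) ^ α) ^ 2 * ((y - x) ^ 2 * (x + y) ^ 2) :=
          le_mul_of_one_le_left (by positivity) e4

lemma ibp_bound (f f' : ℝ → ℂ) (hf : ∀ x, HasDerivAt f (f' x) x) (hf'c : Continuous f')
    (B : ℝ) (hB : ∀ x, ‖f x‖ ≤ B) (hB' : ∀ x, ‖f' x‖ ≤ B)
    (r h : ℝ) (hr : r ≠ 0) (hh : 0 < h) (t : ℝ) :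
    ‖∫ τ in (0:ℝ)..t, f τ * Complex.exp ((τ:ℂ) * (r:ℂ) / (Complex.I * (h:ℂ)))‖
      ≤ (2 + |t|) * B * h / |r| := by
  have hB0 : 0 ≤ B := le_trans (norm_nonneg _) (hB 0)
  set c : ℂ := -((r/h : ℝ) : ℂ) * Complex.I with hc_def
  have hc0 : c ≠ 0 := by
    simp [hc_def, Complex.I_ne_zero, div_eq_zero_iff, hr, hh.ne']
  have hexp_eq : ∀ τ : ℝ, (τ:ℂ) * (r:ℂ) / (Complex.I * (h:ℂ)) = c * τ := by
    intro τ
    have hh' : (h:ℂ) ≠ 0 := by exact_mod_cast hh.ne'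
    rw [hc_def]
    push_cast
    rw [div_eq_iff (mul_ne_zero Complex.I_ne_zero hh')]
    have e : (h:ℂ) / (h:ℂ) = 1 := div_self hh'
    linear_combination (-((r:ℂ) * (τ:ℂ))) * e + ((r:ℂ) * (τ:ℂ) * (h:ℂ) / (h:ℂ)) * Complex.I_mul_I
  have hnorm_exp : ∀ τ : ℝ, ‖Complex.exp (c * τ)‖ = 1 := by
    intro τ
    rw [Complex.norm_exp]
    have : (c * τ).re = 0 := by simp [hc_def]
    rw [this, Real.exp_zero]
  have hnorm_c : ‖c‖ = |r| / h := by
    simp [hc_def, abs_div, abs_of_pos hh]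
  have hvderiv : ∀ τ : ℝ,
      HasDerivAt (fun τ : ℝ => Complex.exp (c * τ) / c) (Complex.exp (c * τ)) τ := by
    intro τ
    have h1 : HasDerivAt (fun z : ℂ => Complex.exp (c * z)) (Complex.exp (c * τ) * c) (τ:ℂ) := by
      simpa using ((hasDerivAt_id (τ:ℂ)).const_mul c).cexp
    have h2 := h1.comp_ofReal
    simpa [mul_div_cancel_right₀ _ hc0] using h2.div_const c
  have hexp_cont : Continuous fun τ : ℝ => Complex.exp (c * τ) := by
    continuity
  have hibp : ∫ τ in (0:ℝ)..t, f τ * Complex.exp (c * τ)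
      = f t * (Complex.exp (c * t) / c) - f 0 * (Complex.exp (c * 0) / c)
        - ∫ τ in (0:ℝ)..t, f' τ * (Complex.exp (c * τ) / c) := by
    apply intervalIntegral.integral_mul_deriv_eq_deriv_mul
      (fun x _ => hf x) (fun x _ => hvderiv x)
      (hf'c.intervalIntegrable _ _) (hexp_cont.intervalIntegrable _ _)
  have hrw : (∫ τ in (0:ℝ)..t, f τ * Complex.exp ((τ:ℂ) * (r:ℂ) / (Complex.I * (h:ℂ))))
      = ∫ τ in (0:ℝ)..t, f τ * Complex.exp (c * τ) := by
    congr 1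
    ext τ
    rw [hexp_eq τ]
  rw [hrw, hibp]
  have hinvc : (1:ℝ) / ‖c‖ = h / |r| := by
    rw [hnorm_c]
    field_simp
  have hterm : ∀ x : ℝ, ‖f x * (Complex.exp (c * x) / c)‖ ≤ B * h / |r| := by
    intro x
    rw [norm_mul, norm_div, hnorm_exp]
    calc ‖f x‖ * (1 / ‖c‖) ≤ B * (1 / ‖c‖) := by
          apply mul_le_mul_of_nonneg_right (hB x)
          positivity
      _ = B * h / |r| := by rw [hinvc]; ring
  have hterm' : ∀ x : ℝ, ‖f' x * (Complex.exp (c * x) / c)‖ ≤ B * h / |r| := by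
    intro x
    rw [norm_mul, norm_div, hnorm_exp]
    calc ‖f' x‖ * (1 / ‖c‖) ≤ B * (1 / ‖c‖) := by
          apply mul_le_mul_of_nonneg_right (hB' x)
          positivity
      _ = B * h / |r| := by rw [hinvc]; ring
  have hint : ‖∫ τ in (0:ℝ)..t, f' τ * (Complex.exp (c * τ) / c)‖
      ≤ (B * h / |r|) * |t - 0| :=
    intervalIntegral.norm_integral_le_of_norm_le_const fun x _ => hterm' x
  calc ‖f t * (Complex.exp (c * t) / c) - f 0 * (Complex.exp (c * 0) / c)
        - ∫ τ in (0:ℝ)..t, f' τ * (Complex.exp (c * τ) / c)‖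
      ≤ ‖f t * (Complex.exp (c * t) / c) - f 0 * (Complex.exp (c * 0) / c)‖
        + ‖∫ τ in (0:ℝ)..t, f' τ * (Complex.exp (c * τ) / c)‖ := norm_sub_le _ _
    _ ≤ (‖f t * (Complex.exp (c * t) / c)‖ + ‖f 0 * (Complex.exp (c * 0) / c)‖)
        + (B * h / |r|) * |t - 0| := add_le_add (norm_sub_le _ _) hint
    _ ≤ ((B * h / |r|) + (B * h / |r|)) + (B * h / |r|) * |t| := by
        rw [sub_zero]
        exact add_le_add (add_le_add (hterm t) (hterm 0)) le_rfl
    _ = (2 + |t|) * B * h / |r| := by ring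

lemma swap_lemma (g : ℤ → ℝ → ℂ) (M : ℤ → ℝ) (hgc : ∀ j, Continuous (g j))
    (hM : Summable M) (hbd : ∀ j τ, ‖g j τ‖ ≤ M j) (t : ℝ) :
    (∫ τ in (0:ℝ)..t, ∑' j, g j τ) = ∑' j, ∫ τ in (0:ℝ)..t, g j τ := by
  have key : ∀ a b : ℝ, a ≤ b →
      (∫ τ in a..b, ∑' j, g j τ) = ∑' j, ∫ τ in a..b, g j τ := by
    intro a b hab
    have hint : ∀ j, Integrable (g j) (volume.restrict (Set.Ioc a b)) := fun j =>
      (hgc j).integrableOn_Ioc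
    have hsum : Summable fun j => ∫ τ in Set.Ioc a b, ‖g j τ‖ := by
      apply Summable.of_nonneg_of_le
        (fun j => integral_nonneg fun x => norm_nonneg _)
        (fun j => ?_) (hM.mul_right (b - a))
      calc ∫ τ in Set.Ioc a b, ‖g j τ‖ ≤ ∫ _ in Set.Ioc a b, M j := by
            apply setIntegral_mono_on ((hint j).norm) (integrableOn_const ?_)
              measurableSet_Ioc (fun x _ => hbd j x)
            rw [Real.volume_Ioc]
            exact ENNReal.ofReal_ne_top
        _ = M j * (b - a) := by
            rw [setIntegral_const, Real.volume_real_Ioc_of_le hab, smul_eq_mul]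
            ring
    rw [intervalIntegral.integral_of_le hab,
      ← MeasureTheory.integral_tsum_of_summable_integral_norm hint hsum]
    exact tsum_congr fun j => (intervalIntegral.integral_of_le hab).symm
  rcases le_total 0 t with h | h
  · exact key 0 t h
  · rw [intervalIntegral.integral_symm, key t 0 h, ← tsum_neg]
    exact tsum_congr fun j => (intervalIntegral.integral_symm _ _).symm

theorem A2_bound (α : ℝ) (hα : 1 < α) :
    ∃ c₁ : ℝ, 0 < c₁ ∧
      ∀ (h cv β : ℝ), 0 < h → 0 < cv → 0 ≤ β →
      ∀ v v' : ℤ → ℝ → ℂ,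
        (∀ m t, HasDerivAt (v m) (v' m t) t) →
        (∀ m, Continuous (v' m)) →
        (∀ t, v 0 t = 0) →
        (∀ m t, ‖v m t‖ ≤ cv * Real.exp (-β * |(m : ℝ)|) / br m ^ α) →
        (∀ m t, ‖v' m t‖ ≤ cv * Real.exp (-β * |(m : ℝ)|) / br m ^ α) →
      ∀ (k₀ : ℤ) (t : ℝ),
        ‖-∫ τ in (0 : ℝ)..t,
            ∑' j : ℤ, if j ≠ k₀ ∧ j ≠ -k₀ then
                v (k₀ - j) τ * v (j - k₀) 0 *
                  Complex.exp ((τ : ℂ) * ((j ^ 2 - k₀ ^ 2 : ℤ) : ℂ) / (Complex.I * h)) /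
                  ((k₀ ^ 2 - j ^ 2 : ℤ) : ℂ)
              else 0‖
          ≤ (2 + |t|) * h * cv ^ 2 * c₁ / br k₀ ^ 2 := by
  have hα1 : (1:ℝ) ≤ α := le_of_lt hα
  have hsumInt : Summable (fun n : ℤ => 1 / (n : ℝ) ^ 2) :=
    Real.summable_one_div_int_pow.mpr one_lt_two
  refine ⟨∑' n : ℤ, 1 / (n : ℝ) ^ 2, ?_, ?_⟩
  · exact Summable.tsum_pos hsumInt (fun n => by positivity) 1 (by norm_num)
  intro h cv β hh hcv hβ v v' hderiv hcont hv0 hbv hbv' k₀ t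
  -- continuity of v
  have hvcont : ∀ m, Continuous (v m) := by
    intro m
    have hd : Differentiable ℝ (v m) := fun x => (hderiv m x).differentiableAt
    exact hd.continuous
  -- simplified bounds
  have hexp1 : ∀ m : ℤ, Real.exp (-β * |(m : ℝ)|) ≤ 1 := by
    intro m
    rw [show (1:ℝ) = Real.exp 0 by rw [Real.exp_zero]]
    apply Real.exp_le_exp.mpr
    nlinarith [abs_nonneg ((m:ℝ))]
  have hvb : ∀ m τ, ‖v m τ‖ ≤ cv / br m ^ α := by
    intro m τ
    calc ‖v m τ‖ ≤ cv * Real.exp (-β * |(m : ℝ)|) / br m ^ α := hbv m τ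
      _ ≤ cv * 1 / br m ^ α := (div_le_div_iff_of_pos_right (br_rpow_pos α m)).mpr
            (mul_le_mul_of_nonneg_left (hexp1 m) hcv.le)
      _ = cv / br m ^ α := by ring
  have hvb' : ∀ m τ, ‖v' m τ‖ ≤ cv / br m ^ α := by
    intro m τ
    calc ‖v' m τ‖ ≤ cv * Real.exp (-β * |(m : ℝ)|) / br m ^ α := hbv' m τ
      _ ≤ cv * 1 / br m ^ α := (div_le_div_iff_of_pos_right (br_rpow_pos α m)).mpr
            (mul_le_mul_of_nonneg_left (hexp1 m) hcv.le)
      _ = cv / br m ^ α := by ring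
  have hfb : ∀ j (τ : ℝ), ‖v (k₀ - j) τ * v (j - k₀) 0‖ ≤ (cv / br (k₀ - j) ^ α) ^ 2 := by
    intro j τ
    rw [norm_mul, sq]
    have e2 := hvb (j - k₀) 0
    have ebr : br (j - k₀) = br (k₀ - j) := by
      rw [show j - k₀ = -(k₀ - j) by ring, br_neg]
    rw [ebr] at e2
    exact mul_le_mul (hvb (k₀ - j) τ) e2 (norm_nonneg _)
      (div_nonneg hcv.le (br_rpow_pos α _).le)
  have hfb' : ∀ j (τ : ℝ), ‖v' (k₀ - j) τ * v (j - k₀) 0‖ ≤ (cv / br (k₀ - j) ^ α) ^ 2 := by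
    intro j τ
    rw [norm_mul, sq]
    have e2 := hvb (j - k₀) 0
    have ebr : br (j - k₀) = br (k₀ - j) := by
      rw [show j - k₀ = -(k₀ - j) by ring, br_neg]
    rw [ebr] at e2
    exact mul_le_mul (hvb' (k₀ - j) τ) e2 (norm_nonneg _)
      (div_nonneg hcv.le (br_rpow_pos α _).le)
  -- nonvanishing of j^2 - k₀^2
  have hr0 : ∀ j : ℤ, j ≠ k₀ → j ≠ -k₀ → ((j ^ 2 - k₀ ^ 2 : ℤ) : ℝ) ≠ 0 := by
    intro j h1 h2
    rw [Int.cast_ne_zero]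
    intro hc
    have : (j - k₀) * (j + k₀) = 0 := by linarith
    rcases mul_eq_zero.mp this with hz | hz
    · exact h1 (by omega)
    · exact h2 (by omega)
  have hcastK : ∀ j : ℤ, ((k₀ ^ 2 - j ^ 2 : ℤ) : ℂ) = ((((k₀ ^ 2 - j ^ 2 : ℤ) : ℝ)) : ℂ) := by
    intro j; push_cast; ring
  have hKnorm : ∀ j : ℤ, ‖((k₀ ^ 2 - j ^ 2 : ℤ) : ℂ)‖ = |((j ^ 2 - k₀ ^ 2 : ℤ) : ℝ)| := by
    intro j
    rw [hcastK, Complex.norm_real, Real.norm_eq_abs,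
      show ((k₀ ^ 2 - j ^ 2 : ℤ) : ℝ) = -((j ^ 2 - k₀ ^ 2 : ℤ) : ℝ) by push_cast; ring, abs_neg]
  have hcastexp : ∀ j : ℤ, ∀ τ : ℝ,
      ((τ : ℂ) * ((j ^ 2 - k₀ ^ 2 : ℤ) : ℂ) / (Complex.I * (h:ℂ)))
        = (τ:ℂ) * ((((j ^ 2 - k₀ ^ 2 : ℤ) : ℝ)):ℂ) / (Complex.I * (h:ℂ)) := by
    intro j τ; push_cast; ring
  -- key per-term estimate
  have hkey : ∀ j : ℤ,
      ‖∫ τ in (0:ℝ)..t, (if j ≠ k₀ ∧ j ≠ -k₀ then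
          v (k₀ - j) τ * v (j - k₀) 0 *
            Complex.exp ((τ : ℂ) * ((j ^ 2 - k₀ ^ 2 : ℤ) : ℂ) / (Complex.I * h)) /
            ((k₀ ^ 2 - j ^ 2 : ℤ) : ℂ) else 0)‖
        ≤ (2 + |t|) * h * cv ^ 2 / (br k₀ ^ 2 * ((k₀ - j : ℤ) : ℝ) ^ 2) := by
    intro j
    by_cases hj : j ≠ k₀ ∧ j ≠ -k₀
    · simp only [if_pos hj]
      obtain ⟨hj1, hj2⟩ := hj
      have hrne := hr0 j hj1 hj2
      have habs : (0:ℝ) < |((j ^ 2 - k₀ ^ 2 : ℤ) : ℝ)| := abs_pos.mpr hrne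
      have hm0 : ((k₀ - j : ℤ) : ℝ) ≠ 0 := by
        rw [Int.cast_ne_zero]; omega
      have hibp := ibp_bound (fun τ => v (k₀ - j) τ * v (j - k₀) 0)
        (fun τ => v' (k₀ - j) τ * v (j - k₀) 0)
        (fun x => (hderiv (k₀ - j) x).mul_const _)
        ((hcont _).mul continuous_const)
        ((cv / br (k₀ - j) ^ α) ^ 2) (hfb j) (hfb' j)
        ((j ^ 2 - k₀ ^ 2 : ℤ) : ℝ) h hrne hh t
      have hsplit : (∫ τ in (0:ℝ)..t, v (k₀ - j) τ * v (j - k₀) 0 *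
            Complex.exp ((τ : ℂ) * ((j ^ 2 - k₀ ^ 2 : ℤ) : ℂ) / (Complex.I * h)) /
            ((k₀ ^ 2 - j ^ 2 : ℤ) : ℂ))
          = (∫ τ in (0:ℝ)..t, v (k₀ - j) τ * v (j - k₀) 0 *
            Complex.exp ((τ:ℂ) * ((((j ^ 2 - k₀ ^ 2 : ℤ) : ℝ)):ℂ) / (Complex.I * (h:ℂ))))
            / ((k₀ ^ 2 - j ^ 2 : ℤ) : ℂ) := by
        rw [← intervalIntegral.integral_div]
        simp only [hcastexp]
      rw [hsplit, norm_div, hKnorm]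
      calc ‖∫ τ in (0:ℝ)..t, v (k₀ - j) τ * v (j - k₀) 0 *
            Complex.exp ((τ:ℂ) * ((((j ^ 2 - k₀ ^ 2 : ℤ) : ℝ)):ℂ) / (Complex.I * (h:ℂ)))‖
            / |((j ^ 2 - k₀ ^ 2 : ℤ) : ℝ)|
          ≤ ((2 + |t|) * ((cv / br (k₀ - j) ^ α) ^ 2) * h / |((j ^ 2 - k₀ ^ 2 : ℤ) : ℝ)|)
            / |((j ^ 2 - k₀ ^ 2 : ℤ) : ℝ)| := by
            exact (div_le_div_iff_of_pos_right habs).mpr hibp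
        _ = (2 + |t|) * h * cv ^ 2 / ((br (k₀ - j) ^ α) ^ 2 * ((j ^ 2 - k₀ ^ 2 : ℤ) : ℝ) ^ 2) := by
            rw [div_div, abs_mul_abs_self]
            ring
        _ ≤ (2 + |t|) * h * cv ^ 2 / (br k₀ ^ 2 * ((k₀ - j : ℤ) : ℝ) ^ 2) := by
            have hmsq : (0:ℝ) < ((k₀ - j : ℤ) : ℝ) ^ 2 := by
              rw [← _root_.sq_abs]
              exact pow_pos (abs_pos.mpr hm0) 2
            apply div_le_div_of_nonneg_left (by positivity)
              (mul_pos (pow_pos (br_pos k₀) 2) hmsq)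
            exact key_arith α hα1 k₀ j hj1 hj2
    · simp only [if_neg hj, intervalIntegral.integral_zero, norm_zero]
      apply div_nonneg <;> positivity
  -- uniform pointwise bound
  have hMbd : ∀ (j : ℤ) (τ : ℝ), ‖(if j ≠ k₀ ∧ j ≠ -k₀ then
          v (k₀ - j) τ * v (j - k₀) 0 *
            Complex.exp ((τ : ℂ) * ((j ^ 2 - k₀ ^ 2 : ℤ) : ℂ) / (Complex.I * h)) /
            ((k₀ ^ 2 - j ^ 2 : ℤ) : ℂ) else 0)‖
        ≤ cv ^ 2 / ((k₀ - j : ℤ) : ℝ) ^ 2 := by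
    intro j τ
    by_cases hj : j ≠ k₀ ∧ j ≠ -k₀
    · rw [if_pos hj]
      obtain ⟨hj1, hj2⟩ := hj
      have hrne := hr0 j hj1 hj2
      have habs : (0:ℝ) < |((j ^ 2 - k₀ ^ 2 : ℤ) : ℝ)| := abs_pos.mpr hrne
      have hm0 : ((k₀ - j : ℤ) : ℝ) ≠ 0 := by rw [Int.cast_ne_zero]; omega
      rw [norm_div, hKnorm, norm_mul, hcastexp j τ, norm_exp_unit _ _ hh.ne' τ, mul_one]
      calc ‖v (k₀ - j) τ * v (j - k₀) 0‖ / |((j ^ 2 - k₀ ^ 2 : ℤ) : ℝ)|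
          ≤ ((cv / br (k₀ - j) ^ α) ^ 2) / |((j ^ 2 - k₀ ^ 2 : ℤ) : ℝ)| :=
            (div_le_div_iff_of_pos_right habs).mpr (hfb j τ)
        _ = cv ^ 2 / ((br (k₀ - j) ^ α) ^ 2 * |((j ^ 2 - k₀ ^ 2 : ℤ) : ℝ)|) := by
            rw [div_pow, div_div]
        _ ≤ cv ^ 2 / ((k₀ - j : ℤ) : ℝ) ^ 2 := by
            have hmsq : (0:ℝ) < ((k₀ - j : ℤ) : ℝ) ^ 2 := by
              rw [← _root_.sq_abs]
              exact pow_pos (abs_pos.mpr hm0) 2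
            apply div_le_div_of_nonneg_left (by positivity) hmsq
            exact key_arith2 α hα1 k₀ j hj1 hj2
    · rw [if_neg hj, norm_zero]
      positivity
  -- summability of the reindexed p-series
  have hre : Summable (fun j : ℤ => 1 / ((k₀ - j : ℤ) : ℝ) ^ 2) := by
    have h2 : Summable ((fun n : ℤ => 1 / (n : ℝ) ^ 2) ∘ (Equiv.subLeft k₀)) :=
      (Equiv.subLeft k₀).summable_iff.mpr hsumInt
    exact h2.congr fun j => by simp [Function.comp, Equiv.subLeft]
  have hMsum : Summable (fun j : ℤ => cv ^ 2 / ((k₀ - j : ℤ) : ℝ) ^ 2) :=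
    (hre.mul_left (cv ^ 2)).congr fun j => by ring
  -- continuity of each term
  have hgc : ∀ j : ℤ, Continuous (fun τ : ℝ => (if j ≠ k₀ ∧ j ≠ -k₀ then
          v (k₀ - j) τ * v (j - k₀) 0 *
            Complex.exp ((τ : ℂ) * ((j ^ 2 - k₀ ^ 2 : ℤ) : ℂ) / (Complex.I * h)) /
            ((k₀ ^ 2 - j ^ 2 : ℤ) : ℂ) else 0)) := by
    intro j
    by_cases hj : j ≠ k₀ ∧ j ≠ -k₀
    · simp only [if_pos hj]
      apply Continuous.div_const
      apply Continuous.mul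
      · exact (hvcont _).mul continuous_const
      · exact Complex.continuous_exp.comp
          ((Complex.continuous_ofReal.mul continuous_const).div_const _)
    · simp only [if_neg hj]
      exact continuous_const
  -- swap integral and sum
  have hswap : (∫ τ in (0:ℝ)..t, ∑' j : ℤ, if j ≠ k₀ ∧ j ≠ -k₀ then
          v (k₀ - j) τ * v (j - k₀) 0 *
            Complex.exp ((τ : ℂ) * ((j ^ 2 - k₀ ^ 2 : ℤ) : ℂ) / (Complex.I * h)) /
            ((k₀ ^ 2 - j ^ 2 : ℤ) : ℂ) else 0)
      = ∑' j : ℤ, ∫ τ in (0:ℝ)..t, (if j ≠ k₀ ∧ j ≠ -k₀ then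
          v (k₀ - j) τ * v (j - k₀) 0 *
            Complex.exp ((τ : ℂ) * ((j ^ 2 - k₀ ^ 2 : ℤ) : ℂ) / (Complex.I * h)) /
            ((k₀ ^ 2 - j ^ 2 : ℤ) : ℂ) else 0) :=
    swap_lemma _ _ hgc hMsum hMbd t
  rw [norm_neg, hswap]
  -- summability of the per-term bounds
  have hWsum : Summable (fun j : ℤ =>
      (2 + |t|) * h * cv ^ 2 / (br k₀ ^ 2 * ((k₀ - j : ℤ) : ℝ) ^ 2)) :=
    (hre.mul_left ((2 + |t|) * h * cv ^ 2 / br k₀ ^ 2)).congr fun j => by ring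
  have hnsum : Summable (fun j : ℤ => ‖∫ τ in (0:ℝ)..t, (if j ≠ k₀ ∧ j ≠ -k₀ then
          v (k₀ - j) τ * v (j - k₀) 0 *
            Complex.exp ((τ : ℂ) * ((j ^ 2 - k₀ ^ 2 : ℤ) : ℂ) / (Complex.I * h)) /
            ((k₀ ^ 2 - j ^ 2 : ℤ) : ℂ) else 0)‖) :=
    Summable.of_nonneg_of_le (fun j => norm_nonneg _) hkey hWsum
  have htsum_re : (∑' j : ℤ, 1 / ((k₀ - j : ℤ) : ℝ) ^ 2) = ∑' n : ℤ, 1 / (n : ℝ) ^ 2 := by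
    rw [← (Equiv.subLeft k₀).tsum_eq (fun n : ℤ => 1 / (n : ℝ) ^ 2)]
    exact tsum_congr fun j => by simp [Equiv.subLeft]
  calc ‖∑' j : ℤ, ∫ τ in (0:ℝ)..t, (if j ≠ k₀ ∧ j ≠ -k₀ then
          v (k₀ - j) τ * v (j - k₀) 0 *
            Complex.exp ((τ : ℂ) * ((j ^ 2 - k₀ ^ 2 : ℤ) : ℂ) / (Complex.I * h)) /
            ((k₀ ^ 2 - j ^ 2 : ℤ) : ℂ) else 0)‖
      ≤ ∑' j : ℤ, ‖∫ τ in (0:ℝ)..t, (if j ≠ k₀ ∧ j ≠ -k₀ then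
          v (k₀ - j) τ * v (j - k₀) 0 *
            Complex.exp ((τ : ℂ) * ((j ^ 2 - k₀ ^ 2 : ℤ) : ℂ) / (Complex.I * h)) /
            ((k₀ ^ 2 - j ^ 2 : ℤ) : ℂ) else 0)‖ := norm_tsum_le_tsum_norm hnsum
    _ ≤ ∑' j : ℤ, (2 + |t|) * h * cv ^ 2 / (br k₀ ^ 2 * ((k₀ - j : ℤ) : ℝ) ^ 2) :=
        Summable.tsum_le_tsum hkey hnsum hWsum
    _ = ∑' j : ℤ, ((2 + |t|) * h * cv ^ 2 / br k₀ ^ 2) * (1 / ((k₀ - j : ℤ) : ℝ) ^ 2) :=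
        tsum_congr fun j => by ring
    _ = ((2 + |t|) * h * cv ^ 2 / br k₀ ^ 2) * ∑' j : ℤ, 1 / ((k₀ - j : ℤ) : ℝ) ^ 2 :=
        tsum_mul_left
    _ = ((2 + |t|) * h * cv ^ 2 / br k₀ ^ 2) * ∑' n : ℤ, 1 / (n : ℝ) ^ 2 := by rw [htsum_re]
    _ = (2 + |t|) * h * cv ^ 2 * (∑' n : ℤ, 1 / (n : ℝ) ^ 2) / br k₀ ^ 2 := by ring
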